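/- Let d ≥ 3 be an integer and p a prime number. Let A be the localization of the polynomial ring ℚ[x,y] away from the element (x + p^{−(d−3)})·y, and let B be the localization of ℚ[x,y] away from x·y. Then the ℚ-algebra homomorphism φ : A → B determined by x ↦ x^d/y² − p^{−(d−3)} and y ↦ x is well defined (the image of (x + p^{−(d−3)})·y equals x^{d+1}/y², a unit of B), and φ is a finite ring homomorphism, i.e. B is finitely generated as a module over A via φ. -/

import Mathlib

open MvPolynomial

set_option maxHeartbeats 1000000

/-- The polynomial ring `ℚ[x,y]`. -/
noncomputable abbrev R2 : Type := MvPolynomial (Fin 2) ℚ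

/-- The constant `p^{-(d-3)} ∈ ℚ`. -/
noncomputable def cdp (d p : ℕ) : ℚ := ((p : ℚ) ^ (d - 3))⁻¹

/-- `A`: the localization of `ℚ[x,y]` away from `(x + p^{-(d-3)})·y`. -/
noncomputable abbrev Aloc (d p : ℕ) : Type :=
  Localization.Away ((X 0 + C (cdp d p)) * X 1 : R2)

/-- `B`: the localization of `ℚ[x,y]` away from `x·y`. -/
noncomputable abbrev Bloc : Type := Localization.Away ((X 0) * (X 1) : R2)

/-- For `d ≥ 3` and `p` prime, the `ℚ`-algebra homomorphism `φ : A → B` determined by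
`x ↦ x^d/y² - p^{-(d-3)}`, `y ↦ x` is well defined — in particular the image of
`(x + p^{-(d-3)})·y` is `x^{d+1}/y²`, a unit of `B` — and `φ` is a finite ring
homomorphism. (The equalities below are written multiplied through by `y²`, which is a
unit of `B`.) -/
theorem stmt13 (d p : ℕ) (hd : 3 ≤ d) (hp : p.Prime) :
    ∃ φ : Aloc d p →+* Bloc,
      (∀ q : ℚ, φ (algebraMap R2 (Aloc d p) (C q)) = algebraMap R2 Bloc (C q)) ∧
      (φ (algebraMap R2 (Aloc d p) (X 0)) * algebraMap R2 Bloc (X 1) ^ 2 =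
        algebraMap R2 Bloc ((X 0) ^ d - C (cdp d p) * (X 1) ^ 2)) ∧
      (φ (algebraMap R2 (Aloc d p) (X 1)) = algebraMap R2 Bloc (X 0)) ∧
      (φ (algebraMap R2 (Aloc d p) ((X 0 + C (cdp d p)) * X 1)) *
          algebraMap R2 Bloc (X 1) ^ 2 = algebraMap R2 Bloc ((X 0) ^ (d + 1))) ∧
      IsUnit (φ (algebraMap R2 (Aloc d p) ((X 0 + C (cdp d p)) * X 1))) ∧
      φ.Finite := by
  classical
  set c : ℚ := cdp d p with hc
  set s : R2 := (X 0 + C c) * X 1 with hs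
  set w : R2 := (X 0) * (X 1) with hw
  set F : R2 →+* Bloc := algebraMap R2 Bloc with hF
  set bx : Bloc := F (X 0) with hbx
  set by' : Bloc := F (X 1) with hby
  -- bx and by' are units
  have hwu : IsUnit (F w) := IsLocalization.Away.algebraMap_isUnit w
  have hxu : IsUnit bx := isUnit_of_mul_isUnit_left (by rwa [← map_mul])
  have hyu : IsUnit by' := isUnit_of_mul_isUnit_right (by rwa [← map_mul])
  obtain ⟨ix, hix⟩ := hxu.exists_right_inv
  obtain ⟨ib, hib⟩ := hyu.exists_right_inv
  have hixd : (bx * ix) ^ (d + 1) = 1 := by rw [hix, one_pow]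
  have hib2 : (by' * ib) ^ 2 = 1 := by rw [hib, one_pow]
  -- the evaluation map
  set g : Fin 2 → Bloc := ![bx ^ d * ib ^ 2 - F (C c), bx] with hg
  set ψ : R2 →+* Bloc := eval₂Hom (F.comp MvPolynomial.C) g with hψ
  have hψC : ∀ q : ℚ, ψ (C q) = F (C q) := fun q => by simp [hψ]
  have hψ0 : ψ (X 0) = bx ^ d * ib ^ 2 - F (C c) := by simp [hψ, hg]
  have hψ1 : ψ (X 1) = bx := by simp [hψ, hg]
  have hψs : ψ s = bx ^ (d + 1) * ib ^ 2 := by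
    rw [hs, map_mul, map_add, hψ0, hψ1, hψC]; ring
  have hsu : IsUnit (ψ s) := by
    refine isUnit_iff_exists_inv.mpr ⟨ix ^ (d + 1) * by' ^ 2, ?_⟩
    rw [hψs]
    linear_combination (by' * ib) ^ 2 * hixd + hib2
  set φ : Aloc d p →+* Bloc := IsLocalization.Away.lift s hsu with hφ
  have heq : ∀ a : R2, φ (algebraMap R2 (Aloc d p) a) = ψ a := fun a =>
    IsLocalization.Away.lift_eq s hsu a
  refine ⟨φ, ?_, ?_, ?_, ?_, ?_, ?_⟩
  · intro q; rw [heq, hψC]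
  · rw [heq, hψ0]; rw [map_sub, map_pow, map_mul, map_pow]
    linear_combination bx ^ d * hib2
  · rw [heq, hψ1]
  · rw [heq, hψs, map_pow]
    linear_combination bx ^ (d + 1) * hib2
  · rw [heq]; exact hsu
  -- finiteness
  letI : Algebra (Aloc d p) Bloc := φ.toAlgebra
  have halg : algebraMap (Aloc d p) Bloc = φ := rfl
  set e : Bloc := φ (IsLocalization.Away.invSelf s) with he
  have hse : ψ s * e = 1 := by
    rw [← heq, he, ← map_mul, IsLocalization.Away.mul_invSelf, map_one]
  rw [hψs] at hse
  -- key elements in the range of φ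
  have hIx : φ (IsLocalization.Away.invSelf s * algebraMap R2 (Aloc d p) (X 0 + C c)) = ix := by
    rw [map_mul, heq, map_add, hψ0, hψC, ← he]
    linear_combination ix * hse - (e * bx ^ d * ib ^ 2) * hix
  have hIb2 : φ ((IsLocalization.Away.invSelf s * algebraMap R2 (Aloc d p) (X 0 + C c)) ^ (d + 1)
      * algebraMap R2 (Aloc d p) s) = ib ^ 2 := by
    rw [map_mul, map_pow, hIx, heq, hψs]
    linear_combination ib ^ 2 * hixd
  have hy2 : φ (algebraMap R2 (Aloc d p) (X 1) ^ (d + 1) * IsLocalization.Away.invSelf s)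
      = by' ^ 2 := by
    rw [map_mul, map_pow, heq, hψ1, ← he]
    linear_combination by' ^ 2 * hse - (bx ^ (d + 1) * e * (by' * ib + 1)) * hib
  set T : Subalgebra (Aloc d p) Bloc := Algebra.adjoin (Aloc d p) {by'} with hT
  have hmem : ∀ a : Aloc d p, φ a ∈ T := fun a => T.algebraMap_mem a
  have hyT : by' ∈ T := Algebra.subset_adjoin rfl
  have hxT : bx ∈ T := by rw [← hψ1, ← heq]; exact hmem _
  have hFT : ∀ r : R2, F r ∈ T := by
    intro r
    induction r using MvPolynomial.induction_on with
    | C q => rw [← hψC, ← heq]; exact hmem _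
    | add f h hf hh => rw [map_add]; exact add_mem hf hh
    | mul_X f i hf =>
      rw [map_mul]
      refine mul_mem hf ?_
      fin_cases i
      · exact hxT
      · exact hyT
  set iw : Bloc := ix * ib ^ 2 * by' with hiwdef
  have hiwT : iw ∈ T := mul_mem (mul_mem (hIx ▸ hmem _) (hIb2 ▸ hmem _)) hyT
  have hiw : F w * iw = 1 := by
    rw [hw, map_mul, hiwdef, ← hbx, ← hby]
    linear_combination (bx * ix) * hib2 + hix
  have hTtop : T = ⊤ := by
    rw [eq_top_iff]
    rintro b -
    obtain ⟨n, a, hn⟩ := IsLocalization.Away.surj (S := Bloc) w b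
    have hb : b = F a * iw ^ n := by
      have h1 : (F w * iw) ^ n = 1 := by rw [hiw, one_pow]
      calc b = b * (F w * iw) ^ n := by rw [h1, mul_one]
        _ = (b * F w ^ n) * iw ^ n := by ring
        _ = F a * iw ^ n := by rw [hF, hn]
    rw [hb]
    exact mul_mem (hFT a) (pow_mem hiwT n)
  have hint : IsIntegral (Aloc d p) by' := by
    refine ⟨Polynomial.X ^ 2 - Polynomial.C (algebraMap R2 (Aloc d p) (X 1) ^ (d + 1)
      * IsLocalization.Away.invSelf s), Polynomial.monic_X_pow_sub_C _ (by norm_num), ?_⟩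
    simp only [Polynomial.eval₂_sub, Polynomial.eval₂_X_pow, Polynomial.eval₂_C]
    rw [halg, hy2, sub_self]
  have hfin : Module.Finite (Aloc d p) Bloc := by
    refine ⟨?_⟩
    have fg := hint.fg_adjoin_singleton
    rw [← hT, hTtop, Algebra.top_toSubmodule] at fg
    exact fg
  exact hfin
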